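/- Let D be a finite acyclic digraph and let v be a vertex of D that is a source or a sink. If every neighbor of v is a sink in the digraph D − v obtained by deleting v, or every neighbor of v is a source in D − v, then v does not lie in any shortcut of D. -/

import Mathlib

/-- `D` is an orientation of the simple graph `G`: every edge gets exactly one direction. -/
def SimpleGraph.IsOrientation {V : Type*} (G : SimpleGraph V) (D : V → V → Prop) : Prop :=
  (∀ u v, G.Adj u v ↔ D u v ∨ D v u) ∧ ∀ u v, D u v → ¬ D v u

/-- A digraph (given as a relation) is acyclic: no directed cycle. -/
def DigraphAcyclic {V : Type*} (D : V → V → Prop) : Prop :=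
  ∀ v, ¬ Relation.TransGen D v v

/-- `D` is a semi-transitive orientation of `G`: it is an acyclic orientation such that for every
directed path `p 0 → p 1 → ⋯ → p k`, either `p 0` and `p k` are non-adjacent in `G`, or
`p i → p j` is an arc for all `i < j`. -/
def SimpleGraph.IsSemitransitiveOrientation {V : Type*} (G : SimpleGraph V)
    (D : V → V → Prop) : Prop :=
  G.IsOrientation D ∧ DigraphAcyclic D ∧
    ∀ (k : ℕ) (p : Fin (k + 1) → V),
      (∀ i : Fin k, D (p i.castSucc) (p i.succ)) →
      (¬ G.Adj (p 0) (p (Fin.last k)) ∨ ∀ i j : Fin (k + 1), i < j → D (p i) (p j))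

/-- A graph is semi-transitive if it admits a semi-transitive orientation. -/
def SimpleGraph.Semitransitive {V : Type*} (G : SimpleGraph V) : Prop :=
  ∃ D : V → V → Prop, G.IsSemitransitiveOrientation D

/-- `s` is (the vertex set of) a shortcut in the digraph `D`: `s = {p 0, p 1, …, p k}` for some
directed path `p 0 → p 1 → ⋯ → p k` with `k ≥ 3` such that `p 0 → p k` is an arc (the
shortcutting arc) and some pair `p i, p j` with `i < j` is joined by no arc in either
direction. -/
def IsShortcut {V : Type*} (D : V → V → Prop) (s : Set V) : Prop :=
  ∃ (k : ℕ) (p : Fin (k + 1) → V), 3 ≤ k ∧ s = Set.range p ∧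
    (∀ i : Fin k, D (p i.castSucc) (p i.succ)) ∧
    D (p 0) (p (Fin.last k)) ∧
    ∃ i j : Fin (k + 1), i < j ∧ ¬ D (p i) (p j) ∧ ¬ D (p j) (p i)

/-- Claim 1 of the paper: in a finite acyclic digraph `D`, if `v` is a source or a sink, and
either all neighbours of `v` are sinks in `D - v` or all of them are sources in `D - v`, then
`v` does not lie in any shortcut of `D`. -/
lemma chain_transGen {V : Type*} {D : V → V → Prop} {k : ℕ} {p : Fin (k+1) → V}
    (hp : ∀ i : Fin k, D (p i.castSucc) (p i.succ)) :
    ∀ j i : Fin (k+1), i < j → Relation.TransGen D (p i) (p j) := by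
  intro j
  induction j using Fin.induction with
  | zero => exact fun i hi => absurd hi (Fin.not_lt_zero i)
  | succ t ih =>
    intro i hi
    have hle : i.val ≤ t.val := by
      rw [Fin.lt_def] at hi; simp only [Fin.val_succ] at hi; omega
    rcases Nat.lt_or_ge i.val t.val with h | h
    · exact (ih i (by rw [Fin.lt_def]; simpa using h)).tail (hp t)
    · have : i = t.castSucc := Fin.ext (by simp; omega)
      subst this
      exact Relation.TransGen.single (hp t)

theorem source_or_sink_not_in_shortcut {V : Type*} [Fintype V] (D : V → V → Prop)
    (hacyc : DigraphAcyclic D) (v : V)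
    (hv : (∀ u, ¬ D u v) ∨ (∀ u, ¬ D v u))
    (hnbr : (∀ u, (D u v ∨ D v u) → ∀ w, w ≠ v → ¬ D u w) ∨
            (∀ u, (D u v ∨ D v u) → ∀ w, w ≠ v → ¬ D w u)) :
    ¬ ∃ s : Set V, IsShortcut D s ∧ v ∈ s := by
  rintro ⟨s, ⟨k, p, hk, hs, hp, h0k, -⟩, hvmem⟩
  obtain ⟨m, hm⟩ : v ∈ Set.range p := hs ▸ hvmem
  have hne : ∀ a b : Fin (k+1), a < b → p a ≠ p b := fun a b hab heq =>
    hacyc (p a) (heq ▸ chain_transGen hp b a hab)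
  rcases hv with hv | hv
  · -- v is a source, so v = p 0
    have hm0 : m = 0 := by
      by_contra h
      obtain ⟨t, rfl⟩ := Fin.eq_succ_of_ne_zero h
      exact hv _ (hm ▸ hp t)
    subst hm0
    rcases hnbr with hA | hB
    · -- neighbor p 1 is a sink in D - v, but p 1 → p 2
      have h01 : D v (p (⟨0, by omega⟩ : Fin k).succ) := hm ▸ hp ⟨0, by omega⟩
      have h12 : D (p (⟨1, by omega⟩ : Fin k).castSucc) (p (⟨1, by omega⟩ : Fin k).succ) :=
        hp ⟨1, by omega⟩
      have e1 : (⟨1, by omega⟩ : Fin k).castSucc = (⟨0, by omega⟩ : Fin k).succ := by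
        ext; simp
      rw [e1] at h12
      have hw : p (⟨1, by omega⟩ : Fin k).succ ≠ v := fun h =>
        hne 0 (⟨1, by omega⟩ : Fin k).succ (by rw [Fin.lt_def]; simp) (hm.trans h.symm)
      exact hA _ (Or.inr h01) _ hw h12
    · -- neighbor p (last k) is a source in D - v, but p (k-1) → p (last k)
      have hlast : D v (p (Fin.last k)) := hm ▸ h0k
      have harc : D (p (⟨k-1, by omega⟩ : Fin k).castSucc) (p (⟨k-1, by omega⟩ : Fin k).succ) :=
        hp ⟨k-1, by omega⟩
      have e1 : (⟨k-1, by omega⟩ : Fin k).succ = Fin.last k := by ext; simp; omega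
      rw [e1] at harc
      have hw : p (⟨k-1, by omega⟩ : Fin k).castSucc ≠ v := fun h =>
        hne 0 (⟨k-1, by omega⟩ : Fin k).castSucc (by rw [Fin.lt_def]; simp; omega)
          (hm.trans h.symm)
      exact hB _ (Or.inr hlast) _ hw harc
  · -- v is a sink, so v = p (last k)
    have hml : m = Fin.last k := by
      by_contra h
      obtain ⟨t, rfl⟩ := Fin.exists_castSucc_eq.mpr h
      exact hv _ (hm ▸ hp t)
    subst hml
    rcases hnbr with hA | hB
    · -- neighbor p 0 is a sink in D - v, but p 0 → p 1
      have h0 : D (p 0) v := hm ▸ h0k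
      have h01 : D (p (⟨0, by omega⟩ : Fin k).castSucc) (p (⟨0, by omega⟩ : Fin k).succ) :=
        hp ⟨0, by omega⟩
      have e0 : (⟨0, by omega⟩ : Fin k).castSucc = (0 : Fin (k+1)) := by ext; simp
      rw [e0] at h01
      have hw : p (⟨0, by omega⟩ : Fin k).succ ≠ v := fun h =>
        hne (⟨0, by omega⟩ : Fin k).succ (Fin.last k)
          (by rw [Fin.lt_def]; simp [Fin.last]; omega) (h.trans hm.symm)
      exact hA _ (Or.inl h0) _ hw h01
    · -- neighbor p (k-1) is a source in D - v, but p (k-2) → p (k-1)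
      have hprev : D (p (⟨k-1, by omega⟩ : Fin k).castSucc) v := by
        have e : (⟨k-1, by omega⟩ : Fin k).succ = Fin.last k := by ext; simp; omega
        have := hp ⟨k-1, by omega⟩
        rw [e, hm] at this
        exact this
      have harc : D (p (⟨k-2, by omega⟩ : Fin k).castSucc) (p (⟨k-2, by omega⟩ : Fin k).succ) :=
        hp ⟨k-2, by omega⟩
      have e2 : (⟨k-2, by omega⟩ : Fin k).succ = (⟨k-1, by omega⟩ : Fin k).castSucc := by
        ext; simp; omega
      rw [e2] at harc
      have hw : p (⟨k-2, by omega⟩ : Fin k).castSucc ≠ v := fun h =>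
        hne (⟨k-2, by omega⟩ : Fin k).castSucc (Fin.last k)
          (by rw [Fin.lt_def]; simp [Fin.last]; omega) (h.trans hm.symm)
      exact hB _ (Or.inl hprev) _ hw harc
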